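/- Let X be a finite set of integers each greater than 1. Then the number of connected components of the bipartite divisor graph B(X) equals the number of connected components of the common divisor graph Γ(X), where Γ(X) has vertex set X and x is adjacent to y (x ≠ y) iff gcd(x, y) > 1. -/

import Mathlib

open SimpleGraph

/-- Vertex type of the bipartite divisor graph of a set of naturals:
the disjoint union of `X` and of the primes dividing some element of `X`. -/
abbrev BDGVert (X : Set ℕ) : Type :=
  {x : ℕ // x ∈ X} ⊕ {p : ℕ // p.Prime ∧ ∃ x ∈ X, p ∣ x}

/-- The bipartite divisor graph `B(X)`: a prime `p` is adjacent to `x ∈ X` iff `p ∣ x`. -/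
def bdg (X : Set ℕ) : SimpleGraph (BDGVert X) :=
  SimpleGraph.fromRel (fun a b =>
    match a, b with
    | Sum.inr p, Sum.inl x => p.1 ∣ x.1
    | _, _ => False)

/-- The prime graph `Δ(X)`: primes `p ≠ q` are adjacent iff `pq` divides some element of `X`. -/
def primeGraph (X : Set ℕ) : SimpleGraph {p : ℕ // p.Prime ∧ ∃ x ∈ X, p ∣ x} :=
  SimpleGraph.fromRel (fun p q => ∃ x ∈ X, p.1 * q.1 ∣ x)

/-- The common divisor graph `Γ(X)`: distinct `x, y ∈ X` are adjacent iff `gcd(x,y) ≠ 1`. -/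
def cdGraph (X : Set ℕ) : SimpleGraph {x : ℕ // x ∈ X} :=
  SimpleGraph.fromRel (fun a b => Nat.gcd a.1 b.1 ≠ 1)

/-- The set of irreducible complex character degrees of a group `G`. -/
def charDegrees (G : Type) [Group G] : Set ℕ :=
  {n | ∃ V : FDRep ℂ G, CategoryTheory.Simple V ∧ Module.finrank ℂ V = n}

/-- Disjoint union of two simple graphs. -/
def disjUnionGraph {α β : Type*} (G : SimpleGraph α) (H : SimpleGraph β) :
    SimpleGraph (α ⊕ β) where
  Adj a b :=
    match a, b with
    | Sum.inl x, Sum.inl y => G.Adj x y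
    | Sum.inr x, Sum.inr y => H.Adj x y
    | _, _ => False
  symm := ⟨by
    rintro (x | x) (y | y) h <;> simp_all <;> exact h.symm⟩
  loopless := ⟨by
    rintro (x | x) h <;> simp_all⟩

noncomputable def pi (X : Set ℕ) : ({x : ℕ // x ∈ X} ⊕ {p : ℕ // p.Prime ∧ ∃ x ∈ X, p ∣ x}) → {x : ℕ // x ∈ X}
  | Sum.inl x => x
  | Sum.inr p => ⟨p.2.2.choose, p.2.2.choose_spec.1⟩

lemma pi_dvd (X : Set ℕ) (p : {p : ℕ // p.Prime ∧ ∃ x ∈ X, p ∣ x}) : p.1 ∣ (pi X (Sum.inr p)).1 :=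
  p.2.2.choose_spec.2

lemma reach_of_common (X : Set ℕ) (x y : {x : ℕ // x ∈ X}) (p : ℕ) (hp : p.Prime)
    (hx : p ∣ x.1) (hy : p ∣ y.1) : (cdGraph X).Reachable x y := by
  by_cases h : x = y
  · exact h ▸ Reachable.refl x
  · refine Adj.reachable ?_
    refine ⟨h, Or.inl ?_⟩
    intro hg
    exact hp.one_lt.ne' (Nat.eq_one_of_dvd_one (hg ▸ Nat.dvd_gcd hx hy))

lemma step (X : Set ℕ) {a b} (h : (bdg X).Adj a b) :
    (cdGraph X).Reachable (pi X a) (pi X b) := by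
  obtain ⟨hne, h | h⟩ := h
  · match a, b with
    | Sum.inr p, Sum.inl x =>
      exact reach_of_common X _ x p.1 p.2.1 (pi_dvd X p) h
  · match a, b with
    | Sum.inl x, Sum.inr p =>
      exact reach_of_common X x _ p.1 p.2.1 h (pi_dvd X p)

lemma reach (X : Set ℕ) {a b} (h : (bdg X).Reachable a b) :
    (cdGraph X).Reachable (pi X a) (pi X b) := by
  obtain ⟨w⟩ := h
  induction w with
  | nil => exact Reachable.refl _
  | cons h w ih => exact (step X h).trans ih

lemma inl_reach (X : Set ℕ) {x y : {x : ℕ // x ∈ X}} (h : (cdGraph X).Adj x y) :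
    (bdg X).Reachable (Sum.inl x) (Sum.inl y) := by
  obtain ⟨hne, h | h⟩ := h
  swap
  rw [Nat.gcd_comm] at h
  all_goals {
    obtain ⟨p, hp, hpd⟩ := Nat.exists_prime_and_dvd h
    have hpx : p ∣ x.1 := hpd.trans (Nat.gcd_dvd_left _ _)
    have hpy : p ∣ y.1 := hpd.trans (Nat.gcd_dvd_right _ _)
    have pmem : p.Prime ∧ ∃ z ∈ X, p ∣ z := ⟨hp, x.1, x.2, hpx⟩
    have h1 : (bdg X).Adj (Sum.inl x) (Sum.inr ⟨p, pmem⟩) := ⟨by simp, Or.inr hpx⟩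
    have h2 : (bdg X).Adj (Sum.inr ⟨p, pmem⟩) (Sum.inl y) := ⟨by simp, Or.inl hpy⟩
    exact h1.reachable.trans h2.reachable
  }


theorem stmt1 (X : Set ℕ) (hfin : X.Finite) (h1 : ∀ x ∈ X, 1 < x) :
    Nat.card (bdg X).ConnectedComponent = Nat.card (cdGraph X).ConnectedComponent := by
  classical
  have hwd : ∀ (v w : {x : ℕ // x ∈ X}) (p : (cdGraph X).Walk v w), p.IsPath →
      (bdg X).connectedComponentMk (Sum.inl v) = (bdg X).connectedComponentMk (Sum.inl w) := by
    intro v w p hp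
    clear hp
    induction p with
    | nil => rfl
    | cons h q ih => exact (ConnectedComponent.sound (inl_reach X h)).trans ih
  let f : (cdGraph X).ConnectedComponent → (bdg X).ConnectedComponent :=
    ConnectedComponent.lift (fun x => (bdg X).connectedComponentMk (Sum.inl x)) hwd
  have hbij : Function.Bijective f := by
    constructor
    · intro c c'
      refine ConnectedComponent.ind₂ (fun x y h => ?_) c c'
      have hr : (bdg X).Reachable (Sum.inl x) (Sum.inl y) :=
        (ConnectedComponent.eq).mp h
      exact ConnectedComponent.sound (reach X hr)
    · intro c
      refine ConnectedComponent.ind (fun a => ?_) c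
      match a with
      | Sum.inl x => exact ⟨(cdGraph X).connectedComponentMk x, rfl⟩
      | Sum.inr p =>
        refine ⟨(cdGraph X).connectedComponentMk (pi X (Sum.inr p)), ?_⟩
        refine ConnectedComponent.sound (Adj.reachable ?_)
        exact ⟨by simp, Or.inr (pi_dvd X p)⟩
  exact (Nat.card_eq_of_bijective f hbij).symm
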